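/- For every non-negative integer n, the quadruple sum ∑_{i=1}^{n-1} ∑_{j=1}^{min(n-i,i)} ∑_{k=0}^{min(n-i-j,j)} ∑_{l=0}^{min(n-i-j-k,k)} 1 satisfies the linear recurrence a_n = 2a_{n-1} - a_{n-3} - 2a_{n-5} + 2a_{n-6} + a_{n-8} - 2a_{n-10} + a_{n-11} for all n ≥ 11, with initial values a_1 = 0, a_2 = 1, a_3 = 3, a_4 = 7, a_5 = 12, a_6 = 20, a_7 = 30, a_8 = 44, a_9 = 61, a_{10} = 83, a_{11} = 109. -/

import Mathlib

open Finset

/-- `a n = ∑_{i=1}^{n-1} ∑_{j=1}^{min(n-i,i)} ∑_{k=0}^{min(n-i-j,j)}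
∑_{l=0}^{min(n-i-j-k,k)} 1`. -/
def quadSum (n : ℕ) : ℕ :=
  ∑ i ∈ Finset.Icc 1 (n - 1), ∑ j ∈ Finset.Icc 1 (min (n - i) i),
    ∑ k ∈ Finset.Icc 0 (min (n - i - j) j),
      ∑ _l ∈ Finset.Icc 0 (min (n - i - j - k) k), 1

/-- Tuples `(a,b,c,d,e)` with `a + 2b + 3c + 4d + e = n`. -/
def Ufin (n : ℕ) : Finset (ℕ × ℕ × ℕ × ℕ × ℕ) :=
  (Finset.range (n+1) ×ˢ Finset.range (n+1) ×ˢ Finset.range (n+1) ×ˢ Finset.range (n+1)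
      ×ˢ Finset.range (n+1)).filter
    fun p => p.1 + 2 * p.2.1 + 3 * p.2.2.1 + 4 * p.2.2.2.1 + p.2.2.2.2 = n

def Wcard (n : ℕ) : ℕ := ((Ufin n).filter fun p => p.2.2.2.1 = 0).card
def Xcard (n : ℕ) : ℕ := ((Ufin n).filter fun p => p.2.2.2.1 = 0 ∧ p.2.2.1 = 0).card
def Ycard (n : ℕ) : ℕ :=
  ((Ufin n).filter fun p => p.2.2.2.1 = 0 ∧ p.2.2.1 = 0 ∧ p.2.1 = 0).card

lemma mem_Ufin {n : ℕ} {p : ℕ × ℕ × ℕ × ℕ × ℕ} :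
    p ∈ Ufin n ↔ p.1 + 2 * p.2.1 + 3 * p.2.2.1 + 4 * p.2.2.2.1 + p.2.2.2.2 = n := by
  obtain ⟨a, b, c, d, e⟩ := p
  simp only [Ufin, Finset.mem_filter, Finset.mem_product, Finset.mem_range]
  constructor
  · rintro ⟨-, h⟩; exact h
  · intro h; refine ⟨⟨?_, ?_, ?_, ?_, ?_⟩, h⟩ <;> omega

lemma Ycard_eq (n : ℕ) : Ycard n = n + 1 := by
  have : Ycard n = (Finset.range (n+1)).card := by
    refine Finset.card_nbij' (fun p => p.1) (fun a => (a, 0, 0, 0, n - a)) ?_ ?_ ?_ ?_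
    · rintro ⟨a, b, c, d, e⟩ hp
      simp only [Finset.mem_coe, Finset.mem_filter, mem_Ufin] at hp
      simp only [Finset.mem_coe, Finset.mem_range]
      omega
    · intro a ha
      simp only [Finset.mem_coe, Finset.mem_range] at ha
      simp only [Finset.mem_coe, Finset.mem_filter, mem_Ufin, true_and, and_true]
      omega
    · rintro ⟨a, b, c, d, e⟩ hp
      simp only [Finset.mem_coe, Finset.mem_filter, mem_Ufin] at hp
      simp only [Prod.mk.injEq, true_and, and_true]
      omega
    · intro a ha; rfl
  simpa using this

lemma Xcard_rec (n : ℕ) : Xcard (n + 2) = Xcard n + Ycard (n + 2) := by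
  classical
  have hsplit := Finset.card_filter_add_card_filter_not
    (s := (Ufin (n+2)).filter fun p => p.2.2.2.1 = 0 ∧ p.2.2.1 = 0)
    (p := fun p => p.2.1 = 0)
  have h1 : (((Ufin (n+2)).filter fun p => p.2.2.2.1 = 0 ∧ p.2.2.1 = 0).filter
      fun p => p.2.1 = 0).card = Ycard (n + 2) := by
    unfold Ycard
    congr 1
    ext p
    simp only [Finset.mem_coe, Finset.mem_filter]
    tauto
  have h2 : (((Ufin (n+2)).filter fun p => p.2.2.2.1 = 0 ∧ p.2.2.1 = 0).filter
      fun p => ¬ p.2.1 = 0).card = Xcard n := by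
    unfold Xcard
    refine Finset.card_nbij' (fun p => (p.1, p.2.1 - 1, p.2.2)) (fun p => (p.1, p.2.1 + 1, p.2.2))
      ?_ ?_ ?_ ?_ <;>
    · rintro ⟨a, b, c, d, e⟩ hp
      simp only [Finset.mem_coe, Finset.mem_filter, mem_Ufin, true_and, and_true] at hp ⊢
      first
      | omega
      | (simp only [Prod.mk.injEq, true_and, and_true]; omega)
  unfold Xcard at *
  omega

lemma Wcard_rec (n : ℕ) : Wcard (n + 3) = Wcard n + Xcard (n + 3) := by
  classical
  have hsplit := Finset.card_filter_add_card_filter_not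
    (s := (Ufin (n+3)).filter fun p => p.2.2.2.1 = 0)
    (p := fun p => p.2.2.1 = 0)
  have h1 : (((Ufin (n+3)).filter fun p => p.2.2.2.1 = 0).filter
      fun p => p.2.2.1 = 0).card = Xcard (n + 3) := by
    unfold Xcard
    congr 1
    ext p
    simp only [Finset.mem_coe, Finset.mem_filter]
    tauto
  have h2 : (((Ufin (n+3)).filter fun p => p.2.2.2.1 = 0).filter
      fun p => ¬ p.2.2.1 = 0).card = Wcard n := by
    unfold Wcard
    refine Finset.card_nbij' (fun p => (p.1, p.2.1, p.2.2.1 - 1, p.2.2.2))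
      (fun p => (p.1, p.2.1, p.2.2.1 + 1, p.2.2.2)) ?_ ?_ ?_ ?_ <;>
    · rintro ⟨a, b, c, d, e⟩ hp
      simp only [Finset.mem_coe, Finset.mem_filter, mem_Ufin, true_and, and_true] at hp ⊢
      first
      | omega
      | (simp only [Prod.mk.injEq, true_and, and_true]; omega)
  unfold Wcard at *
  omega

lemma Ucard_rec (n : ℕ) : (Ufin (n + 4)).card = (Ufin n).card + Wcard (n + 4) := by
  classical
  have hsplit := Finset.card_filter_add_card_filter_not
    (s := Ufin (n+4)) (p := fun p => p.2.2.2.1 = 0)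
  have h2 : ((Ufin (n+4)).filter fun p => ¬ p.2.2.2.1 = 0).card = (Ufin n).card := by
    refine Finset.card_nbij' (fun p => (p.1, p.2.1, p.2.2.1, p.2.2.2.1 - 1, p.2.2.2.2))
      (fun p => (p.1, p.2.1, p.2.2.1, p.2.2.2.1 + 1, p.2.2.2.2)) ?_ ?_ ?_ ?_ <;>
    · rintro ⟨a, b, c, d, e⟩ hp
      simp only [Finset.mem_coe, Finset.mem_filter, mem_Ufin, true_and, and_true] at hp ⊢
      first
      | omega
      | (simp only [Prod.mk.injEq, true_and, and_true]; omega)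
  unfold Wcard at *
  omega

/-- The quadruple sum counts tuples with `b+c+d ≥ 1`. -/
lemma quadSum_eq_card (n : ℕ) :
    quadSum n = ((Ufin n).filter fun p => 1 ≤ p.2.1 + p.2.2.1 + p.2.2.2.1).card := by
  classical
  rw [quadSum]
  rw [Finset.sum_sigma', Finset.sum_sigma', Finset.sum_sigma']
  rw [Finset.sum_const, smul_eq_mul, mul_one]
  refine Finset.card_nbij'
    (fun x => (x.1.1.1 - x.1.1.2, x.1.1.2 - x.1.2, x.1.2 - x.2, x.2,
      n - (x.1.1.1 + x.1.1.2 + x.1.2 + x.2)))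
    (fun p => (⟨⟨⟨p.1 + p.2.1 + p.2.2.1 + p.2.2.2.1, p.2.1 + p.2.2.1 + p.2.2.2.1⟩,
      p.2.2.1 + p.2.2.2.1⟩, p.2.2.2.1⟩ :
        Σ _ : Σ _ : Σ _ : ℕ, ℕ, ℕ, ℕ)) ?_ ?_ ?_ ?_
  · rintro ⟨⟨⟨i, j⟩, k⟩, l⟩ hx
    simp only [Finset.mem_coe, Finset.mem_sigma, Finset.mem_Icc] at hx
    simp only [Finset.mem_coe, Finset.mem_filter, mem_Ufin, true_and, and_true]
    omega
  · rintro ⟨a, b, c, d, e⟩ hp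
    simp only [Finset.mem_coe, Finset.mem_filter, mem_Ufin] at hp
    simp only [Finset.mem_coe, Finset.mem_sigma, Finset.mem_Icc, true_and, and_true]
    omega
  · rintro ⟨⟨⟨i, j⟩, k⟩, l⟩ hx
    simp only [Finset.mem_coe, Finset.mem_sigma, Finset.mem_Icc] at hx
    simp only [Sigma.mk.inj_iff, heq_eq_eq, true_and, and_true]
    omega
  · rintro ⟨a, b, c, d, e⟩ hp
    simp only [Finset.mem_coe, Finset.mem_filter, mem_Ufin] at hp
    simp only [Prod.mk.injEq, true_and, and_true]
    omega

lemma quadSum_add (n : ℕ) : quadSum n + (n + 1) = (Ufin n).card := by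
  classical
  have hsplit := Finset.card_filter_add_card_filter_not
    (s := Ufin n) (p := fun p => 1 ≤ p.2.1 + p.2.2.1 + p.2.2.2.1)
  have h2 : ((Ufin n).filter fun p => ¬ 1 ≤ p.2.1 + p.2.2.1 + p.2.2.2.1).card = n + 1 := by
    have : ((Ufin n).filter fun p => ¬ 1 ≤ p.2.1 + p.2.2.1 + p.2.2.2.1).card
        = (Finset.range (n+1)).card := by
      refine Finset.card_nbij' (fun p => p.1) (fun a => (a, 0, 0, 0, n - a)) ?_ ?_ ?_ ?_
      · rintro ⟨a, b, c, d, e⟩ hp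
        simp only [Finset.mem_coe, Finset.mem_filter, mem_Ufin] at hp
        simp only [Finset.mem_coe, Finset.mem_range]
        omega
      · intro a ha
        simp only [Finset.mem_coe, Finset.mem_range] at ha
        simp only [Finset.mem_coe, Finset.mem_filter, mem_Ufin, true_and, and_true]
        omega
      · rintro ⟨a, b, c, d, e⟩ hp
        simp only [Finset.mem_coe, Finset.mem_filter, mem_Ufin] at hp
        simp only [Prod.mk.injEq, true_and, and_true]
        omega
      · intro a ha; rfl
    simpa using this
  rw [quadSum_eq_card]
  omega

/-- `a_n = 2a_{n-1} - a_{n-3} - 2a_{n-5} + 2a_{n-6} + a_{n-8} - 2a_{n-10} + a_{n-11}`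
for `n ≥ 11`, with the stated initial values. -/
theorem quadSum_recurrence :
    (∀ n : ℕ, 11 ≤ n →
      (quadSum n : ℤ) = 2 * quadSum (n - 1) - quadSum (n - 3) - 2 * quadSum (n - 5)
        + 2 * quadSum (n - 6) + quadSum (n - 8) - 2 * quadSum (n - 10)
        + quadSum (n - 11)) ∧
    quadSum 1 = 0 ∧ quadSum 2 = 1 ∧ quadSum 3 = 3 ∧ quadSum 4 = 7 ∧ quadSum 5 = 12 ∧
    quadSum 6 = 20 ∧ quadSum 7 = 30 ∧ quadSum 8 = 44 ∧ quadSum 9 = 61 ∧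
    quadSum 10 = 83 ∧ quadSum 11 = 109 := by
  constructor
  · intro n hn
    obtain ⟨m, rfl⟩ : ∃ m, n = m + 11 := ⟨n - 11, by omega⟩
    have e1 : m + 11 - 1 = m + 10 := by omega
    have e3 : m + 11 - 3 = m + 8 := by omega
    have e5 : m + 11 - 5 = m + 6 := by omega
    have e6 : m + 11 - 6 = m + 5 := by omega
    have e8 : m + 11 - 8 = m + 3 := by omega
    have e10 : m + 11 - 10 = m + 1 := by omega
    have e11 : m + 11 - 11 = m := by omega
    rw [e1, e3, e5, e6, e8, e10, e11]
    have hU : ∀ a b : ℕ, a + 4 = b → (Ufin b).card = (Ufin a).card + Wcard b := by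
      rintro a b rfl; exact Ucard_rec a
    have hW : ∀ a b : ℕ, a + 3 = b → Wcard b = Wcard a + Xcard b := by
      rintro a b rfl; exact Wcard_rec a
    have hX : ∀ a b : ℕ, a + 2 = b → Xcard b = Xcard a + Ycard b := by
      rintro a b rfl; exact Xcard_rec a
    have hY : ∀ a b : ℕ, a + 1 = b → Ycard a = b := by
      rintro a b rfl; exact Ycard_eq a
    have hq : ∀ a b : ℕ, a + 1 = b → quadSum a + b = (Ufin a).card := by
      rintro a b rfl; exact quadSum_add a
    have hU0 := hU m (m+4) rfl
    have hU1 := hU (m+1) (m+5) rfl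
    have hU2 := hU (m+2) (m+6) rfl
    have hU3 := hU (m+3) (m+7) rfl
    have hU4 := hU (m+4) (m+8) rfl
    have hU5 := hU (m+5) (m+9) rfl
    have hU6 := hU (m+6) (m+10) rfl
    have hU7 := hU (m+7) (m+11) rfl
    have hW1 := hW (m+1) (m+4) rfl
    have hW2 := hW (m+2) (m+5) rfl
    have hW3 := hW (m+3) (m+6) rfl
    have hW4 := hW (m+4) (m+7) rfl
    have hW5 := hW (m+5) (m+8) rfl
    have hW6 := hW (m+6) (m+9) rfl
    have hW7 := hW (m+7) (m+10) rfl
    have hW8 := hW (m+8) (m+11) rfl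
    have hX2 := hX (m+2) (m+4) rfl
    have hX3 := hX (m+3) (m+5) rfl
    have hX4 := hX (m+4) (m+6) rfl
    have hX5 := hX (m+5) (m+7) rfl
    have hX6 := hX (m+6) (m+8) rfl
    have hX7 := hX (m+7) (m+9) rfl
    have hX8 := hX (m+8) (m+10) rfl
    have hX9 := hX (m+9) (m+11) rfl
    have hY4 := hY (m+4) (m+5) rfl
    have hY5 := hY (m+5) (m+6) rfl
    have hY6 := hY (m+6) (m+7) rfl
    have hY7 := hY (m+7) (m+8) rfl
    have hY8 := hY (m+8) (m+9) rfl
    have hY9 := hY (m+9) (m+10) rfl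
    have hY10 := hY (m+10) (m+11) rfl
    have hY11 := hY (m+11) (m+12) rfl
    have hq0 := hq m (m+1) rfl
    have hq1 := hq (m+1) (m+2) rfl
    have hq3 := hq (m+3) (m+4) rfl
    have hq5 := hq (m+5) (m+6) rfl
    have hq6 := hq (m+6) (m+7) rfl
    have hq8 := hq (m+8) (m+9) rfl
    have hq10 := hq (m+10) (m+11) rfl
    have hq11 := hq (m+11) (m+12) rfl
    have hq2 := hq (m+2) (m+3) rfl
    have hq4 := hq (m+4) (m+5) rfl
    have hq7 := hq (m+7) (m+8) rfl
    have hq9 := hq (m+9) (m+10) rfl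
    clear hU hW hX hY hq e1 e3 e5 e6 e8 e10 e11 hn
    omega
  · refine ⟨by decide, by decide, by decide, by decide, by decide, by decide, by decide,
      by decide, by decide, by decide, by decide⟩
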